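/- If AD(X) is strongly star-Scheepers, then X is strongly star-Scheepers. -/
import Mathlib


open Set

/-- The dominating number 𝔡: least cardinality of a dominating family in ℕ^ℕ. -/
noncomputable def dominatingNumber : Cardinal :=
  sInf { c | ∃ D : Set (ℕ → ℕ),
    (∀ g : ℕ → ℕ, ∃ f ∈ D, ∀ᶠ n in Filter.atTop, g n ≤ f n) ∧ c = Cardinal.mk D }

/-- `U` is an open cover of the space `X`. -/
def IsOpenCover {X : Type*} [TopologicalSpace X] (U : Set (Set X)) : Prop :=
  (∀ u ∈ U, IsOpen u) ∧ ⋃₀ U = Set.univ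

/-- The star of a set `A` with respect to a family `U`. -/
def starOf {X : Type*} (A : Set X) (U : Set (Set X)) : Set X :=
  ⋃₀ {B | B ∈ U ∧ (A ∩ B).Nonempty}

/-- The star-Scheepers property (ω-cover form). -/
def StarScheepers (X : Type*) [TopologicalSpace X] : Prop :=
  ∀ U : ℕ → Set (Set X), (∀ n, IsOpenCover (U n)) →
    ∃ V : ℕ → Set (Set X), (∀ n, V n ⊆ U n ∧ (V n).Finite) ∧
      ∀ F : Set X, F.Finite → ∃ n, F ⊆ starOf (⋃₀ V n) (U n)

/-- The strongly star-Scheepers property. -/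
def StronglyStarScheepers (X : Type*) [TopologicalSpace X] : Prop :=
  ∀ U : ℕ → Set (Set X), (∀ n, IsOpenCover (U n)) →
    ∃ F : ℕ → Set X, (∀ n, (F n).Finite) ∧
      ∀ G : Set X, G.Finite → ∃ n, G ⊆ starOf (F n) (U n)

/-- The topology of the Alexandroff duplicate AD(X) on X × Bool:
points (x, true) are isolated, and basic neighbourhoods of (x, false)
are (U × {false,true}) \ {(x, true)} for U an open neighbourhood of x. -/
def ADTop (X : Type*) [TopologicalSpace X] : TopologicalSpace (X × Bool) :=
  TopologicalSpace.generateFrom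
    ({S | ∃ x : X, S = {(x, true)}} ∪
     {S | ∃ (x : X) (U : Set X), IsOpen U ∧ x ∈ U ∧
        S = (U ×ˢ (Set.univ : Set Bool)) \ {(x, true)}})



lemma ad_open_prod {X : Type*} [TopologicalSpace X] {u : Set X} (hu : IsOpen u) :
    @IsOpen (X × Bool) (ADTop X) (u ×ˢ (Set.univ : Set Bool)) := by
  have heq : u ×ˢ (Set.univ : Set Bool) =
      (⋃ x ∈ u, {(x, true)}) ∪ ⋃ x ∈ u, ((u ×ˢ (Set.univ : Set Bool)) \ {(x, true)}) := by
    ext ⟨y, b⟩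
    constructor
    · intro hy
      cases b with
      | true => exact Or.inl (Set.mem_biUnion hy.1 rfl)
      | false =>
        refine Or.inr (Set.mem_biUnion hy.1 ⟨hy, ?_⟩)
        simp
    · rintro (hmem | hmem)
      · obtain ⟨x, hx, hyx⟩ := Set.mem_iUnion₂.mp hmem
        rw [Set.mem_singleton_iff.mp hyx]
        exact ⟨hx, trivial⟩
      · obtain ⟨x, hx, hyx⟩ := Set.mem_iUnion₂.mp hmem
        exact hyx.1
  rw [heq]
  letI := ADTop X
  refine IsOpen.union ?_ ?_
  · exact isOpen_biUnion fun x hx =>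
      TopologicalSpace.GenerateOpen.basic _ (Or.inl ⟨x, rfl⟩)
  · exact isOpen_biUnion fun x hx =>
      TopologicalSpace.GenerateOpen.basic _ (Or.inr ⟨x, u, hu, hx, rfl⟩)

theorem stmt_14 {X : Type*} [TopologicalSpace X]
    (h : @StronglyStarScheepers (X × Bool) (ADTop X)) :
    StronglyStarScheepers X := by
  intro U hU
  set W : ℕ → Set (Set (X × Bool)) :=
    fun n => (fun u => u ×ˢ (Set.univ : Set Bool)) '' U n with hWdef
  have hW : ∀ n, @IsOpenCover (X × Bool) (ADTop X) (W n) := by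
    intro n
    constructor
    · rintro v ⟨u, hu, rfl⟩
      exact ad_open_prod ((hU n).1 u hu)
    · apply Set.eq_univ_of_forall
      rintro ⟨x, b⟩
      have hx : x ∈ ⋃₀ U n := (hU n).2 ▸ Set.mem_univ x
      obtain ⟨u, hu, hxu⟩ := hx
      exact ⟨u ×ˢ (Set.univ : Set Bool), ⟨u, hu, rfl⟩, hxu, trivial⟩
  obtain ⟨F, hFfin, hF⟩ := h W hW
  refine ⟨fun n => Prod.fst '' F n, fun n => (hFfin n).image _, ?_⟩
  intro G hG
  obtain ⟨n, hn⟩ := hF ((fun x => (x, false)) '' G) (hG.image _)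
  refine ⟨n, fun x hx => ?_⟩
  have hmem : (x, false) ∈ starOf (F n) (W n) := hn ⟨x, hx, rfl⟩
  obtain ⟨B, ⟨hBW, ⟨p, hpF, hpB⟩⟩, hxB⟩ := hmem
  obtain ⟨u, huU, rfl⟩ := hBW
  exact ⟨u, ⟨huU, ⟨p.1, ⟨p, hpF, rfl⟩, hpB.1⟩⟩, hxB.1⟩
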